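/- If G is a good graph that contains a cycle, then G does not contain a cut-vertex. -/

import Mathlib

/-- Number of k-nearly independent vertex subsets: subsets whose induced subgraph has exactly k edges. -/
def sigmaK {V : Type*} [Fintype V] [DecidableEq V] (G : SimpleGraph V) [DecidableRel G.Adj] (k : ℕ) : ℕ :=
  (Finset.univ.filter fun s : Finset V =>
    (s.sym2.filter fun e => e ∈ G.edgeSet).card = k).card

/-- A graph is good if for every edge uv, N[u] ∪ N[v] = V(G). -/
def IsGoodGraph {V : Type*} (G : SimpleGraph V) : Prop :=
  ∀ u v : V, G.Adj u v →
    (insert u (G.neighborSet u)) ∪ (insert v (G.neighborSet v)) = Set.univ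

/-- A cut-vertex: a vertex whose deletion disconnects the graph. -/
def IsCutVertex {V : Type*} (G : SimpleGraph V) (v : V) : Prop :=
  G.Connected ∧ ¬ (G.induce {w | w ≠ v}).Connected

lemma aux {V : Type*} {G : SimpleGraph V} {v : V} (c : G.Walk v v) (hc : c.IsCycle) :
    ∃ a b, G.Adj a b ∧ a ≠ v ∧ b ≠ v := by
  cases c with
  | nil => exact absurd rfl hc.ne_nil
  | cons h q =>
    cases q with
    | nil => exact absurd h G.irrefl
    | cons h' q' =>
      cases q' with
      | nil =>
        have := hc.three_le_length
        simp at this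
      | cons h'' q'' =>
        refine ⟨_, _, h', (G.ne_of_adj h).symm, ?_⟩
        have hnd := hc.2
        simp only [SimpleGraph.Walk.support_cons, List.tail_cons, List.nodup_cons] at hnd
        intro heq
        exact hnd.2.1 (by rw [heq]; exact q''.end_mem_support)

/-- Any graph with a cycle has an edge avoiding any given vertex. -/
lemma exists_adj_ne {V : Type*} (G : SimpleGraph V) (v : V) (hcyc : ¬ G.IsAcyclic) :
    ∃ a b, G.Adj a b ∧ a ≠ v ∧ b ≠ v := by
  classical
  rw [SimpleGraph.IsAcyclic] at hcyc
  push_neg at hcyc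
  obtain ⟨w, c, hc⟩ := hcyc
  by_cases hv : v ∈ c.support
  · -- rotate the cycle to start at v
    have hc' := hc.rotate hv
    exact aux (c.rotate v hv) hc'
  · cases c with
    | nil => exact absurd rfl hc.ne_nil
    | cons h q =>
      refine ⟨_, _, h, ?_, ?_⟩
      · intro heq; exact hv (heq ▸ SimpleGraph.Walk.start_mem_support _)
      · intro heq
        apply hv
        rw [SimpleGraph.Walk.support_cons]
        exact List.mem_cons_of_mem _ (heq ▸ q.start_mem_support)

theorem stmt5 {V : Type*} (G : SimpleGraph V)
    (hgood : IsGoodGraph G) (hcyc : ¬ G.IsAcyclic) :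
    ∀ v : V, ¬ IsCutVertex G v := by
  intro v hcut
  obtain ⟨hconn, hnc⟩ := hcut
  obtain ⟨a, b, hab, ha, hb⟩ := exists_adj_ne G v hcyc
  apply hnc
  have hkey : ∀ x : V, x = a ∨ G.Adj a x ∨ x = b ∨ G.Adj b x := by
    intro x
    have := hgood a b hab
    have hx : x ∈ (insert a (G.neighborSet a)) ∪ (insert b (G.neighborSet b)) := by
      rw [this]; trivial
    rcases hx with hx | hx
    · rcases hx with hx | hx
      · exact Or.inl hx
      · exact Or.inr (Or.inl hx)
    · rcases hx with hx | hx
      · exact Or.inr (Or.inr (Or.inl hx))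
      · exact Or.inr (Or.inr (Or.inr hx))
  have hadj : ∀ (x y : V) (hx : x ≠ v) (hy : y ≠ v), G.Adj x y →
      (G.induce {w | w ≠ v}).Adj ⟨x, hx⟩ ⟨y, hy⟩ := by
    intro x y hx hy h
    exact h
  have hreach : ∀ (x : V) (hx : x ≠ v),
      (G.induce {w | w ≠ v}).Reachable ⟨x, hx⟩ ⟨a, ha⟩ := by
    intro x hx
    rcases hkey x with rfl | h | rfl | h
    · exact SimpleGraph.Reachable.refl _
    · exact (SimpleGraph.Adj.reachable (hadj a x ha hx h)).symm
    · exact SimpleGraph.Adj.reachable (hadj x a hx ha hab.symm)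
    · exact ((SimpleGraph.Adj.reachable (hadj b x hb hx h)).symm).trans
        (SimpleGraph.Adj.reachable (hadj b a hb ha hab.symm))
  rw [SimpleGraph.connected_iff]
  exact ⟨fun x y => (hreach x.1 x.2).trans (hreach y.1 y.2).symm, ⟨⟨a, ha⟩⟩⟩
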